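/- arXiv:1603.03179 — 2 statements merged into one kernel-verified Lean document; each statement's English description precedes it below -/
import Mathlib

section
/- Let μ, ν be probability measures on ℝ^d with μ ≪ ν, and let μ^(N) be an exchangeable probability measure on (ℝ^d)^N whose first marginal is μ^(1,N). Then H(μ^(1,N) | ν) ≤ (2/N) H(μ^(N) | ν^{⊗N}), where H denotes relative entropy (Csiszár's inequality). -/
open MeasureTheory
open scoped BigOperators ENNReal Classical
open Real

section Aux

variable {α : Type*} [MeasurableSpace α] {ρ σ : Measure α}

lemma my_integrable_exp_neg_llr [IsProbabilityMeasure ρ] [IsProbabilityMeasure σ]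
    (h : ρ ≪ σ) : Integrable (fun x => Real.exp (- llr ρ σ x)) ρ :=
  (Measure.integrable_toReal_rnDeriv).congr (exp_neg_llr h).symm

lemma my_integral_exp_neg_llr_le_one [IsProbabilityMeasure ρ] [IsProbabilityMeasure σ]
    (h : ρ ≪ σ) : ∫ x, Real.exp (- llr ρ σ x) ∂ρ ≤ 1 := by
  rw [integral_congr_ae (exp_neg_llr h)]
  calc ∫ x, (σ.rnDeriv ρ x).toReal ∂ρ ≤ (σ Set.univ).toReal := by
        rw [← setIntegral_univ]
        exact Measure.setIntegral_toReal_rnDeriv_le (measure_ne_top σ _)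
    _ = 1 := by simp

lemma my_integrable_negPart_llr [IsProbabilityMeasure ρ] [IsProbabilityMeasure σ]
    (h : ρ ≪ σ) : Integrable (fun x => max (- llr ρ σ x) 0) ρ := by
  refine (my_integrable_exp_neg_llr h).mono'
    (((measurable_llr ρ σ).neg.max measurable_const).aestronglyMeasurable) ?_
  refine Filter.Eventually.of_forall fun x => ?_
  rw [Real.norm_eq_abs, abs_of_nonneg (le_max_right _ _)]
  have h1 := Real.add_one_le_exp (- llr ρ σ x)
  have h2 := (Real.exp_pos (- llr ρ σ x)).le
  simp only [le_max_iff, max_le_iff]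
  constructor <;> linarith

lemma my_integral_llr_nonneg [IsProbabilityMeasure ρ] [IsProbabilityMeasure σ]
    (h : ρ ≪ σ) (hi : Integrable (llr ρ σ) ρ) : 0 ≤ ∫ x, llr ρ σ x ∂ρ := by
  have hjen := (convexOn_exp).map_integral_le (continuous_exp.continuousOn)
    isClosed_univ (Filter.Eventually.of_forall fun x => Set.mem_univ _)
    hi.neg (by exact my_integrable_exp_neg_llr h)
  simp only [Pi.neg_apply, integral_neg] at hjen
  have : Real.exp (- ∫ x, llr ρ σ x ∂ρ) ≤ 1 := hjen.trans (my_integral_exp_neg_llr_le_one h)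
  have := Real.exp_le_exp.mp (by simpa using this.trans_eq (Real.exp_zero).symm)
  linarith

end Aux
lemma my_lintegral_pi_prod {α : Type*} [MeasurableSpace α] (μ : Measure α) [SigmaFinite μ] :
    ∀ {n : ℕ} (f : Fin n → α → ℝ≥0∞), (∀ i, Measurable (f i)) →
      ∫⁻ x : Fin n → α, ∏ i, f i (x i) ∂(Measure.pi fun _ => μ) = ∏ i, ∫⁻ y, f i y ∂μ := by
  intro n
  induction n with
  | zero => intro f hf; simp
  | succ n ih =>
    intro f hf
    have hmp := (measurePreserving_piFinSuccAbove (fun _ : Fin (n + 1) => μ) 0).symm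
    have hmeas : Measurable fun x : Fin (n + 1) → α => ∏ i, f i (x i) :=
      Finset.measurable_prod _ fun i _ => (hf i).comp (measurable_pi_apply i)
    rw [← hmp.map_eq, lintegral_map hmeas (MeasurableEquiv.measurable _)]
    have he : ∀ a : α × (Fin n → α),
        (MeasurableEquiv.piFinSuccAbove (fun _ : Fin (n+1) => α) 0).symm a
          = Fin.cons a.1 a.2 := by
      intro a
      simp [MeasurableEquiv.piFinSuccAbove, Fin.insertNth_zero']
      rfl
    calc ∫⁻ a, ∏ i, f i (((MeasurableEquiv.piFinSuccAbove (fun _ : Fin (n+1) => α) 0).symm a) i)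
          ∂((μ).prod (Measure.pi fun _ : Fin n => μ))
        = ∫⁻ a, f 0 a.1 * ∏ i : Fin n, f i.succ (a.2 i)
          ∂((μ).prod (Measure.pi fun _ : Fin n => μ)) := by
          refine lintegral_congr fun a => ?_
          rw [he a, Fin.prod_univ_succ, Fin.cons_zero]
          simp [Fin.cons_succ]
      _ = (∫⁻ y, f 0 y ∂μ) * ∫⁻ x : Fin n → α, ∏ i : Fin n, f i.succ (x i)
            ∂(Measure.pi fun _ : Fin n => μ) := by
          exact lintegral_prod_mul ((hf 0).aemeasurable)
            (Finset.measurable_prod _ fun (i : Fin n) _ =>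
              (hf i.succ).comp (measurable_pi_apply i)).aemeasurable
      _ = ∏ i, ∫⁻ y, f i y ∂μ := by
          rw [ih _ fun i => hf i.succ, Fin.prod_univ_succ]

lemma my_pi_withDensity {α : Type*} [MeasurableSpace α] {n : ℕ} (ν μ1 : Measure α)
    [SigmaFinite ν] [SigmaFinite μ1] {f : α → ℝ≥0∞} (hf : Measurable f)
    (h : μ1 = ν.withDensity f) :
    (Measure.pi fun _ : Fin n => ν).withDensity (fun x => ∏ i, f (x i))
      = Measure.pi (fun _ : Fin n => μ1) := by
  refine (Measure.pi_eq fun s hs => ?_).symm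
  rw [withDensity_apply _ (MeasurableSet.univ_pi hs),
    ← lintegral_indicator (MeasurableSet.univ_pi hs)]
  have hind : ∀ x : Fin n → α,
      (Set.pi Set.univ s).indicator (fun x => ∏ i, f (x i)) x
        = ∏ i, (s i).indicator f (x i) := by
    intro x
    by_cases hx : x ∈ Set.pi Set.univ s
    · rw [Set.indicator_of_mem hx]
      exact Finset.prod_congr rfl fun i _ =>
        (Set.indicator_of_mem (hx i (Set.mem_univ i)) f).symm
    · rw [Set.indicator_of_notMem hx]
      rw [Set.mem_univ_pi] at hx
      push_neg at hx
      obtain ⟨i, hi⟩ := hx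
      exact (Finset.prod_eq_zero (Finset.mem_univ i) (Set.indicator_of_notMem hi f)).symm
  rw [lintegral_congr hind, my_lintegral_pi_prod ν _ (fun i => hf.indicator (hs i))]
  refine Finset.prod_congr rfl fun i _ => ?_
  rw [lintegral_indicator (hs i), ← withDensity_apply _ (hs i), ← h]


/-- Relative entropy `H(μ | ν) = ∫ log (dμ/dν) dμ` if `μ ≪ ν` (and the integral makes
sense), `+∞` otherwise. -/

noncomputable def relEnt {α : Type*} [MeasurableSpace α] (μ ν : Measure α) : ℝ≥0∞ :=
  if μ ≪ ν ∧ Integrable (llr μ ν) μ then ENNReal.ofReal (∫ x, llr μ ν x ∂μ) else ∞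

/-- Csiszár's inequality: the relative entropy of the first marginal of an exchangeable
law with respect to `ν` is at most `2/N` times the relative entropy of the joint law with
respect to `ν^{⊗N}`. -/
theorem csiszar_inequality {d N : ℕ} [NeZero N]
    (μN : Measure (Fin N → EuclideanSpace ℝ (Fin d))) [IsProbabilityMeasure μN]
    (hex : ∀ σ : Equiv.Perm (Fin N), μN.map (fun x => x ∘ σ) = μN)
    (ν : Measure (EuclideanSpace ℝ (Fin d))) [IsProbabilityMeasure ν]
    (μ1 : Measure (EuclideanSpace ℝ (Fin d))) (hμ1 : μ1 = μN.map (fun x => x 0))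
    (hac : μ1 ≪ ν) :
    relEnt μ1 ν ≤ (2 / (N : ℝ≥0∞)) * relEnt μN (Measure.pi fun _ : Fin N => ν) := by
  classical
  set X := EuclideanSpace ℝ (Fin d) with hX
  set νN : Measure (Fin N → X) := Measure.pi fun _ : Fin N => ν with hνN
  by_cases hcase : μN ≪ νN ∧ Integrable (llr μN νN) μN
  swap
  · have h2N : (2 : ℝ≥0∞) / N ≠ 0 := by
      simp [ENNReal.div_eq_zero_iff]
    have hrel : relEnt μN νN = ⊤ := by rw [relEnt, if_neg hcase]
    rw [hrel, ENNReal.mul_top h2N]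
    exact le_top
  obtain ⟨hacN, hintN⟩ := hcase
  haveI hμ1prob : IsProbabilityMeasure μ1 :=
    hμ1 ▸ Measure.isProbabilityMeasure_map ((measurable_pi_apply 0).aemeasurable)
  -- all marginals are μ1
  have hmap : ∀ i : Fin N, μN.map (fun x => x i) = μ1 := by
    intro i
    rw [hμ1]
    conv_lhs => rw [← hex (Equiv.swap i 0)]
    have hperm : Measurable (fun x : Fin N → X => x ∘ (Equiv.swap i 0)) :=
      measurable_pi_lambda _ fun a => measurable_pi_apply _
    rw [Measure.map_map (measurable_pi_apply i) hperm]
    congr 1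
    funext x
    simp [Function.comp, Equiv.swap_apply_left]
  set f : X → ℝ≥0∞ := μ1.rnDeriv ν with hfdef
  have hfmeas : Measurable f := Measure.measurable_rnDeriv _ _
  haveI : μ1.HaveLebesgueDecomposition ν := Measure.haveLebesgueDecomposition_of_sigmaFinite _ _
  have hμ1d : μ1 = ν.withDensity f := (Measure.withDensity_rnDeriv_eq μ1 ν hac).symm
  set μ1N : Measure (Fin N → X) := Measure.pi fun _ : Fin N => μ1 with hμ1N
  haveI : IsProbabilityMeasure μ1N := by
    constructor
    rw [hμ1N, Measure.pi_univ]
    simp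
  set F : (Fin N → X) → ℝ≥0∞ := fun x => ∏ i, f (x i) with hFdef
  have hFmeas : Measurable F :=
    Finset.measurable_prod _ fun i _ => hfmeas.comp (measurable_pi_apply i)
  have hpi : νN.withDensity F = μ1N := my_pi_withDensity ν μ1 hfmeas hμ1d
  have hac1N : μ1N ≪ νN := by
    rw [← hpi]; exact withDensity_absolutelyContinuous νN F
  have hrnF : μ1N.rnDeriv νN =ᵐ[νN] F := by
    rw [← hpi]; exact Measure.rnDeriv_withDensity νN hFmeas
  -- μN gives no mass to zeros of the densities
  have hmuNf0 : ∀ i : Fin N, μN {x | f (x i) = 0} = 0 := by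
    intro i
    have hs : MeasurableSet {y : X | f y = 0} := hfmeas (measurableSet_singleton 0)
    have h1 : μN {x | f (x i) = 0} = μ1 {y | f y = 0} := by
      rw [← hmap i, Measure.map_apply (measurable_pi_apply i) hs]
      rfl
    rw [h1, hμ1d, withDensity_apply_eq_zero hfmeas]
    have he : ({x : X | f x ≠ 0} ∩ {y : X | f y = 0}) = ∅ := by
      ext y
      simp only [Set.mem_inter_iff, Set.mem_setOf_eq, Set.mem_empty_iff_false, iff_false]
      tauto
    rw [he]
    exact measure_empty
  have hacμ : μN ≪ μ1N := by
    intro E hE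
    rw [← hpi, withDensity_apply_eq_zero hFmeas] at hE
    have hE2 : μN ({x | F x ≠ 0} ∩ E) = 0 := hacN hE
    have hzero : μN {x | F x = 0} = 0 := by
      refine measure_mono_null (fun x hx => ?_) (measure_iUnion_null fun i => hmuNf0 i)
      simp only [hFdef, Set.mem_setOf_eq, Finset.prod_eq_zero_iff] at hx
      obtain ⟨i, -, h0⟩ := hx
      exact Set.mem_iUnion.2 ⟨i, h0⟩
    refine measure_mono_null (fun x hx => ?_) (measure_union_null hE2 hzero)
    by_cases h0 : F x = 0
    · exact Or.inr h0
    · exact Or.inl ⟨h0, hx⟩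
  -- a.e. positivity/finiteness facts
  haveI : μN.HaveLebesgueDecomposition μ1N := Measure.haveLebesgueDecomposition_of_sigmaFinite _ _
  have hLpos : ∀ᵐ x ∂μN, 0 < μN.rnDeriv μ1N x := Measure.rnDeriv_pos hacμ
  have hLlt : ∀ᵐ x ∂μN, μN.rnDeriv μ1N x < ∞ := hacμ.ae_le (Measure.rnDeriv_lt_top μN μ1N)
  have hfae : ∀ᵐ y ∂μ1, 0 < f y ∧ f y < ∞ :=
    (Measure.rnDeriv_pos hac).and (hac.ae_le (Measure.rnDeriv_lt_top μ1 ν))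
  have hfi : ∀ i : Fin N, ∀ᵐ x ∂μN, 0 < f (x i) ∧ f (x i) < ∞ := by
    intro i
    have hs : MeasurableSet {y : X | 0 < f y ∧ f y < ∞} := by
      exact hfmeas ((measurableSet_Ioi).inter measurableSet_Iio)
    have h1 : ∀ᵐ y ∂(μN.map fun x => x i), 0 < f y ∧ f y < ∞ := by rw [hmap i]; exact hfae
    exact (ae_map_iff (measurable_pi_apply i).aemeasurable hs).mp h1
  -- the chain rule, μN-a.e.
  have hchain : llr μN νN =ᵐ[μN] fun x => llr μN μ1N x + ∑ i, llr μ1 ν (x i) := by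
    have hmul : μN.rnDeriv μ1N * μ1N.rnDeriv νN =ᵐ[μN] μN.rnDeriv νN :=
      hacN.ae_le (Measure.rnDeriv_mul_rnDeriv hacμ)
    have hFeq : μ1N.rnDeriv νN =ᵐ[μN] F := hacN.ae_le hrnF
    filter_upwards [hmul, hFeq, hLpos, hLlt, ae_all_iff.2 hfi] with x h1 h2 h3 h4 h5
    have hFx : μ1N.rnDeriv νN x = ∏ i, f (x i) := h2
    have hrw : μN.rnDeriv νN x = μN.rnDeriv μ1N x * ∏ i, f (x i) := by
      rw [← h1, Pi.mul_apply, hFx]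
    have ha0 : (μN.rnDeriv μ1N x).toReal ≠ 0 :=
      ENNReal.toReal_ne_zero.mpr ⟨h3.ne', h4.ne⟩
    have hb0 : ∀ i : Fin N, (f (x i)).toReal ≠ 0 := fun i =>
      ENNReal.toReal_ne_zero.mpr ⟨(h5 i).1.ne', (h5 i).2.ne⟩
    have hprod0 : (∏ i, (f (x i)).toReal) ≠ 0 :=
      Finset.prod_ne_zero_iff.mpr fun i _ => hb0 i
    show Real.log (μN.rnDeriv νN x).toReal = _
    rw [hrw, ENNReal.toReal_mul, ENNReal.toReal_prod,
      Real.log_mul ha0 hprod0, Real.log_prod fun i _ => hb0 i]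
    rfl
  -- integrability of the negative parts
  have hnegL : Integrable (fun x => max (- llr μN μ1N x) 0) μN :=
    my_integrable_negPart_llr hacμ
  have hterm_negs : ∀ i : Fin N, Integrable (fun x => max (- llr μ1 ν (x i)) 0) μN := by
    intro i
    have h0 : Integrable (fun y => max (- llr μ1 ν y) 0) (μN.map fun x => x i) := by
      rw [hmap i]; exact my_integrable_negPart_llr hac
    exact (integrable_map_measure
      (((measurable_llr μ1 ν).neg.max measurable_const).aestronglyMeasurable)
      (measurable_pi_apply i).aemeasurable).mp h0
  -- integrability of the sum of the llr's of the coordinates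
  set S : (Fin N → X) → ℝ := fun x => ∑ i, llr μ1 ν (x i) with hSdef
  have hSmeas : Measurable S :=
    Finset.measurable_sum _ fun i _ => (measurable_llr μ1 ν).comp (measurable_pi_apply i)
  have hsum_negs : Integrable (fun x => ∑ i, max (- llr μ1 ν (x i)) 0) μN :=
    integrable_finset_sum _ fun i _ => hterm_negs i
  have hSint : Integrable S μN := by
    refine Integrable.mono' ((hintN.abs.add hnegL).add hsum_negs)
      hSmeas.aestronglyMeasurable ?_
    filter_upwards [hchain] with x hx
    have hxS : S x = llr μN νN x - llr μN μ1N x := by rw [hSdef]; simp only; exact eq_sub_of_add_eq' hx.symm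
    have h1 : - S x ≤ ∑ i, max (- llr μ1 ν (x i)) 0 := by
      rw [hSdef]
      simp only
      rw [← Finset.sum_neg_distrib]
      exact Finset.sum_le_sum fun i _ => le_max_left _ _
    have h2 : (0:ℝ) ≤ ∑ i, max (- llr μ1 ν (x i)) 0 :=
      Finset.sum_nonneg fun i _ => le_max_right _ _
    have h3 : - llr μN μ1N x ≤ max (- llr μN μ1N x) 0 := le_max_left _ _
    have h4 : (0:ℝ) ≤ max (- llr μN μ1N x) 0 := le_max_right _ _
    have h5 := le_abs_self (llr μN νN x)
    have h6 := neg_abs_le (llr μN νN x)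
    rw [Real.norm_eq_abs, abs_le]
    simp only [Pi.add_apply]
    constructor <;> linarith
  -- integrability of each coordinate llr
  have hterm_int : ∀ i : Fin N, Integrable (fun x => llr μ1 ν (x i)) μN := by
    intro i
    refine Integrable.mono' (hSint.abs.add hsum_negs)
      ((measurable_llr μ1 ν).comp (measurable_pi_apply i)).aestronglyMeasurable
      (Filter.Eventually.of_forall fun x => ?_)
    have hSx : S x = ∑ j, llr μ1 ν (x j) := rfl
    have hsplit : llr μ1 ν (x i) + ∑ j ∈ Finset.univ.erase i, llr μ1 ν (x j)
        = ∑ j, llr μ1 ν (x j) :=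
      Finset.add_sum_erase Finset.univ (fun j => llr μ1 ν (x j)) (Finset.mem_univ i)
    have h1 : ∑ j ∈ Finset.univ.erase i, (- llr μ1 ν (x j))
        ≤ ∑ j ∈ Finset.univ.erase i, max (- llr μ1 ν (x j)) 0 :=
      Finset.sum_le_sum fun j _ => le_max_left _ _
    have h2 : ∑ j ∈ Finset.univ.erase i, max (- llr μ1 ν (x j)) 0
        ≤ ∑ j, max (- llr μ1 ν (x j)) 0 :=
      Finset.sum_le_sum_of_subset_of_nonneg (Finset.erase_subset _ _)
        fun j _ _ => le_max_right _ _
    have h3 : - llr μ1 ν (x i) ≤ max (- llr μ1 ν (x i)) 0 := le_max_left _ _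
    have h4 : max (- llr μ1 ν (x i)) 0 ≤ ∑ j, max (- llr μ1 ν (x j)) 0 :=
      Finset.single_le_sum (f := fun j => max (- llr μ1 ν (x j)) 0)
        (fun j _ => le_max_right _ _) (Finset.mem_univ i)
    have h5 := le_abs_self (S x)
    have h6 := neg_abs_le (S x)
    have h7 : ∑ j ∈ Finset.univ.erase i, (- llr μ1 ν (x j))
        = - ∑ j ∈ Finset.univ.erase i, llr μ1 ν (x j) := by
      rw [Finset.sum_neg_distrib]
    rw [Real.norm_eq_abs, abs_le]
    simp only [Pi.add_apply]
    constructor <;> linarith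
  have hllr1_int : Integrable (llr μ1 ν) μ1 := by
    have h := (integrable_map_measure (stronglyMeasurable_llr μ1 ν).aestronglyMeasurable
      (measurable_pi_apply 0).aemeasurable).mpr (hterm_int 0)
    rwa [hmap 0] at h
  have hterm_eq : ∀ i : Fin N, ∫ x, llr μ1 ν (x i) ∂μN = ∫ y, llr μ1 ν y ∂μ1 := by
    intro i
    have h := integral_map (μ := μN) (φ := fun x => x i) (f := llr μ1 ν)
      (measurable_pi_apply i).aemeasurable
      (stronglyMeasurable_llr μ1 ν).aestronglyMeasurable
    rw [hmap i] at h
    exact h.symm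
  have hSint_eq : ∫ x, S x ∂μN = (N : ℝ) * ∫ y, llr μ1 ν y ∂μ1 := by
    rw [hSdef]
    simp only
    rw [integral_finset_sum _ fun i _ => hterm_int i]
    simp only [hterm_eq]
    rw [Finset.sum_const, Finset.card_univ, Fintype.card_fin, nsmul_eq_mul]
  have hLint : Integrable (llr μN μ1N) μN := by
    refine (hintN.sub hSint).congr ?_
    filter_upwards [hchain] with x hx
    simp only [Pi.sub_apply]
    linarith [hx]
  have hL_nonneg : 0 ≤ ∫ x, llr μN μ1N x ∂μN := my_integral_llr_nonneg hacμ hLint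
  have hI_nonneg : 0 ≤ ∫ y, llr μ1 ν y ∂μ1 := my_integral_llr_nonneg hac hllr1_int
  have hJ : ∫ x, llr μN νN x ∂μN
      = ∫ x, llr μN μ1N x ∂μN + (N : ℝ) * ∫ y, llr μ1 ν y ∂μ1 := by
    rw [integral_congr_ae hchain, integral_add hLint hSint, hSint_eq]
  -- conclusion
  have hNpos : (0:ℝ) < N := Nat.cast_pos.mpr (Nat.pos_of_ne_zero (NeZero.ne N))
  set I : ℝ := ∫ y, llr μ1 ν y ∂μ1 with hI
  set J : ℝ := ∫ x, llr μN νN x ∂μN with hJdef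
  have hJ_nonneg : 0 ≤ J := by
    rw [hJ]
    have := mul_nonneg hNpos.le hI_nonneg
    linarith
  have hIle : I ≤ (2 / N) * J := by
    have h1 : (N:ℝ) * I ≤ J := by rw [hJ]; linarith
    rw [div_mul_eq_mul_div, le_div_iff₀ hNpos]
    nlinarith
  have hrel1 : relEnt μ1 ν = ENNReal.ofReal I := by rw [relEnt, if_pos ⟨hac, hllr1_int⟩]
  have hrel2 : relEnt μN νN = ENNReal.ofReal J := by rw [relEnt, if_pos ⟨hacN, hintN⟩]
  rw [hrel1, hrel2]
  calc ENNReal.ofReal I ≤ ENNReal.ofReal ((2 / N) * J) := ENNReal.ofReal_le_ofReal hIle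
    _ = ENNReal.ofReal (2 / N) * ENNReal.ofReal J := ENNReal.ofReal_mul (by positivity)
    _ = (2 / (N : ℝ≥0∞)) * ENNReal.ofReal J := by
        rw [ENNReal.ofReal_div_of_pos hNpos, ENNReal.ofReal_ofNat, ENNReal.ofReal_natCast]
end

section
/- Suppose for all N ≥ 1 and t ≥ 0 one has W₂²(m_t^{⊗N}, m_t^{(N)}) ≤ K e^{2bt} (parallel coupling estimate), W₂²(m_t^{(N)}, m_∞^{(N)}) ≤ K N e^{−χt} (entropy decay plus Talagrand), and W₂²(m_∞^{(N)}, m_∞^{⊗N}) ≤ K (equilibrium chaos estimate), where K, b, χ > 0 are constants independent of N and t, and m_t, m_∞ are probability measures on ℝ^{2d} with W₂²(m_t^{⊗N}, m_∞^{⊗N}) = N W₂²(m_t, m_∞). Then for all t ≥ 0, W₂²(m_t, m_∞) ≤ K' e^{−χt} for some constant K' depending only on K, b, χ (obtained by the triangle inequality for W₂ and letting N → ∞). -/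
open MeasureTheory ENNReal
open scoped BigOperators

/-- The set of couplings of two measures. -/
def couplings {X Y : Type*} [MeasurableSpace X] [MeasurableSpace Y]
    (μ : Measure X) (ν : Measure Y) : Set (Measure (X × Y)) :=
  {π | π.map Prod.fst = μ ∧ π.map Prod.snd = ν}

/-- Squared quadratic Wasserstein distance on an (extended) metric space. -/
noncomputable def W2sq {X : Type*} [MeasurableSpace X] [PseudoEMetricSpace X]
    (μ ν : Measure X) : ℝ≥0∞ :=
  ⨅ (π : Measure (X × X)) (_ : π ∈ couplings μ ν), ∫⁻ p, edist p.1 p.2 ^ 2 ∂π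

/-- Squared quadratic Wasserstein distance on `(ℝ^{2d})^N` for the Euclidean
(coordinate-sum) cost. -/
noncomputable def W2sqPi {d N : ℕ}
    (μ ν : Measure (Fin N → EuclideanSpace ℝ (Fin d))) : ℝ≥0∞ :=
  ⨅ (π : Measure ((Fin N → EuclideanSpace ℝ (Fin d)) × (Fin N → EuclideanSpace ℝ (Fin d))))
    (_ : π ∈ couplings μ ν), ∫⁻ p, ∑ i, edist (p.1 i) (p.2 i) ^ 2 ∂π

/-! ### Auxiliary lemmas -/

lemma sq_add_le_two_mul_sq (a b : ℝ≥0∞) : (a + b) ^ 2 ≤ 2 * a ^ 2 + 2 * b ^ 2 := by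
  rcases eq_or_ne a ⊤ with rfl | ha
  · have h1 : (2 : ℝ≥0∞) * ⊤ ^ 2 = ⊤ := by
      rw [sq, ENNReal.top_mul_top, ENNReal.mul_top (by norm_num)]
    rw [h1]
    exact le_top.trans le_self_add
  rcases eq_or_ne b ⊤ with rfl | hb
  · have h1 : (2 : ℝ≥0∞) * ⊤ ^ 2 = ⊤ := by
      rw [sq, ENNReal.top_mul_top, ENNReal.mul_top (by norm_num)]
    rw [h1]
    exact le_top.trans le_add_self
  lift a to NNReal using ha
  lift b to NNReal using hb
  rw [← ENNReal.coe_add, ← ENNReal.coe_pow, ← ENNReal.coe_pow, ← ENNReal.coe_pow,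
    ← ENNReal.coe_ofNat, ← ENNReal.coe_mul, ← ENNReal.coe_mul, ← ENNReal.coe_add,
    ENNReal.coe_le_coe, ← NNReal.coe_le_coe]
  push_cast
  nlinarith [sq_nonneg ((a : ℝ) - b)]

section Gluing

variable {T : Type*} [MeasurableSpace T] [StandardBorelSpace T] [Nonempty T]

open ProbabilityTheory

/-- Gluing of two couplings with a common middle marginal, together with the
resulting cost estimate. -/
lemma glue_le (C1 C2 C : T → T → ℝ≥0∞)
    (hC1 : Measurable fun p : T × T => C1 p.1 p.2)
    (hC2 : Measurable fun p : T × T => C2 p.1 p.2)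
    (hC : Measurable fun p : T × T => C p.1 p.2)
    (hpt : ∀ x y z, C x z ≤ 2 * C1 x y + 2 * C2 y z)
    (π1 π2 : Measure (T × T)) [IsProbabilityMeasure π1] [IsProbabilityMeasure π2]
    (hmar : π1.map Prod.snd = π2.map Prod.fst) :
    ∃ π : Measure (T × T),
      π.map Prod.fst = π1.map Prod.fst ∧ π.map Prod.snd = π2.map Prod.snd ∧
      ∫⁻ p, C p.1 p.2 ∂π ≤ 2 * ∫⁻ p, C1 p.1 p.2 ∂π1 + 2 * ∫⁻ p, C2 p.1 p.2 ∂π2 := by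
  set ν : Measure T := π2.map Prod.fst with hν
  have hprobν : IsProbabilityMeasure ν := Measure.isProbabilityMeasure_map measurable_fst.aemeasurable
  set π1' : Measure (T × T) := π1.map Prod.swap with hπ1'
  have hprob1' : IsProbabilityMeasure π1' :=
    Measure.isProbabilityMeasure_map measurable_swap.aemeasurable
  set κ1 := π1'.condKernel with hκ1
  set κ2 := π2.condKernel with hκ2
  have hfst1 : π1'.fst = ν := by
    rw [hπ1', Measure.fst, Measure.map_map measurable_fst measurable_swap]
    have : (Prod.fst ∘ Prod.swap : T × T → T) = Prod.snd := rfl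
    rw [this, hmar]
  have hfst2 : π2.fst = ν := rfl
  have hd1 : ν ⊗ₘ κ1 = π1' := by rw [← hfst1, hκ1, π1'.disintegrate π1'.condKernel]
  have hd2 : ν ⊗ₘ κ2 = π2 := by rw [← hfst2, hκ2, π2.disintegrate π2.condKernel]
  set ρ : Measure (T × (T × T)) := ν ⊗ₘ (κ1 ×ₖ κ2) with hρ
  have hm21 : Measurable fun p : T × (T × T) => p.2.1 := measurable_fst.comp measurable_snd
  have hm22 : Measurable fun p : T × (T × T) => p.2.2 := measurable_snd.comp measurable_snd
  refine ⟨ρ.map Prod.snd, ?_, ?_, ?_⟩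
  · -- first marginal
    rw [Measure.map_map measurable_fst measurable_snd,
      show (Prod.fst ∘ Prod.snd : T × (T × T) → T) = fun p => p.2.1 from rfl]
    have h1 : π1.map Prod.fst = (ν ⊗ₘ κ1).map Prod.snd := by
      rw [hd1, hπ1', Measure.map_map measurable_snd measurable_swap]
      rfl
    rw [h1]
    ext s hs
    rw [Measure.map_apply hm21 hs, Measure.map_apply measurable_snd hs,
      Measure.compProd_apply (hm21 hs), Measure.compProd_apply (measurable_snd hs)]
    refine lintegral_congr fun y => ?_
    have hpre : (Prod.mk y ⁻¹' ((fun p : T × (T × T) => p.2.1) ⁻¹' s)) = s ×ˢ Set.univ := by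
      ext q; simp [Set.mem_prod]
    have hpre2 : (Prod.mk y ⁻¹' (Prod.snd ⁻¹' s)) = s := rfl
    rw [hpre, hpre2, Kernel.prod_apply, Measure.prod_prod, measure_univ, mul_one]
  · -- second marginal
    rw [Measure.map_map measurable_snd measurable_snd,
      show (Prod.snd ∘ Prod.snd : T × (T × T) → T) = fun p => p.2.2 from rfl]
    have h2 : π2.map Prod.snd = (ν ⊗ₘ κ2).map Prod.snd := by rw [hd2]
    rw [h2]
    ext s hs
    rw [Measure.map_apply hm22 hs, Measure.map_apply measurable_snd hs,
      Measure.compProd_apply (hm22 hs), Measure.compProd_apply (measurable_snd hs)]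
    refine lintegral_congr fun y => ?_
    have hpre : (Prod.mk y ⁻¹' ((fun p : T × (T × T) => p.2.2) ⁻¹' s)) = Set.univ ×ˢ s := by
      ext q; simp [Set.mem_prod]
    have hpre2 : (Prod.mk y ⁻¹' (Prod.snd ⁻¹' s)) = s := rfl
    rw [hpre, hpre2, Kernel.prod_apply, Measure.prod_prod, measure_univ, one_mul]
  · -- cost estimate
    have hI1 : ∫⁻ p, C1 p.1 p.2 ∂π1 = ∫⁻ y, ∫⁻ x, C1 x y ∂(κ1 y) ∂ν := by
      have hCswap : Measurable fun q : T × T => C1 q.2 q.1 := hC1.comp measurable_swap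
      have e1 : ∫⁻ p, C1 p.1 p.2 ∂π1 = ∫⁻ q, C1 q.2 q.1 ∂π1' := by
        rw [hπ1']
        exact (lintegral_map hCswap measurable_swap).symm
      rw [e1, ← hd1]
      exact Measure.lintegral_compProd hCswap
    have hI2 : ∫⁻ p, C2 p.1 p.2 ∂π2 = ∫⁻ y, ∫⁻ z, C2 y z ∂(κ2 y) ∂ν := by
      rw [← hd2, Measure.lintegral_compProd hC2]
    rw [lintegral_map hC measurable_snd]
    have hCρ : Measurable fun p : T × (T × T) => C p.2.1 p.2.2 := hC.comp measurable_snd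
    rw [show (fun p : T × (T × T) => C (Prod.snd p).1 (Prod.snd p).2)
        = fun p : T × (T × T) => C p.2.1 p.2.2 from rfl]
    rw [hρ, Measure.lintegral_compProd hCρ]
    have step1 : ∫⁻ y, ∫⁻ q : T × T, C q.1 q.2 ∂((κ1 ×ₖ κ2) y) ∂ν
        ≤ ∫⁻ y, (2 * ∫⁻ x, C1 x y ∂(κ1 y) + 2 * ∫⁻ z, C2 y z ∂(κ2 y)) ∂ν := by
      refine lintegral_mono fun y => ?_
      rw [Kernel.prod_apply]
      have hmono : ∫⁻ q : T × T, C q.1 q.2 ∂((κ1 y).prod (κ2 y))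
          ≤ ∫⁻ q : T × T, (2 * C1 q.1 y + 2 * C2 y q.2) ∂((κ1 y).prod (κ2 y)) :=
        lintegral_mono fun q => hpt q.1 y q.2
      refine hmono.trans (le_of_eq ?_)
      have hm1 : Measurable fun q : T × T => 2 * C1 q.1 y :=
        (hC1.comp (measurable_fst.prodMk measurable_const)).const_mul 2
      have hm2 : Measurable fun q : T × T => 2 * C2 y q.2 :=
        (hC2.comp (measurable_const.prodMk measurable_snd)).const_mul 2
      have hmc1 : Measurable fun x : T => C1 x y :=
        hC1.comp (measurable_id.prodMk measurable_const)
      have hmc2 : Measurable fun z : T => C2 y z :=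
        hC2.comp (measurable_const.prodMk measurable_id)
      rw [lintegral_add_left hm1]
      congr 1
      · rw [MeasureTheory.lintegral_prod _ hm1.aemeasurable]
        simp_rw [lintegral_const, measure_univ, mul_one]
        exact lintegral_const_mul 2 hmc1
      · rw [MeasureTheory.lintegral_prod _ hm2.aemeasurable]
        have h2' : ∫⁻ z, 2 * C2 y z ∂(κ2 y) = 2 * ∫⁻ z, C2 y z ∂(κ2 y) :=
          lintegral_const_mul 2 hmc2
        simp_rw [h2', lintegral_const, measure_univ, mul_one]
    refine step1.trans (le_of_eq ?_)
    have hmeas1 : Measurable fun y => ∫⁻ x, C1 x y ∂(κ1 y) :=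
      Measurable.lintegral_kernel_prod_right (κ := κ1) (f := fun y x => C1 x y)
        (hC1.comp measurable_swap)
    have hmeas2 : Measurable fun y => ∫⁻ z, C2 y z ∂(κ2 y) :=
      Measurable.lintegral_kernel_prod_right (κ := κ2) (f := fun y z => C2 y z) hC2
    rw [lintegral_add_left (hmeas1.const_mul 2), lintegral_const_mul _ hmeas1,
      lintegral_const_mul _ hmeas2, hI1, hI2]

end Gluing

lemma le_two_mul_iInf_add {P : Type*} [MeasurableSpace P] {S : Set (Measure P)}
    {g : Measure P → ℝ≥0∞} {c C : ℝ≥0∞}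
    (h : ∀ π ∈ S, C ≤ 2 * g π + c) : C ≤ 2 * (⨅ π ∈ S, g π) + c := by
  have heq : 2 * (⨅ π ∈ S, g π) + c = ⨅ π ∈ S, (2 * g π + c) := by
    simp_rw [ENNReal.mul_iInf_of_ne two_ne_zero ENNReal.ofNat_ne_top, ENNReal.iInf_add]
  rw [heq]
  exact le_iInf₂ h

lemma isProbabilityMeasure_of_coupling {X Y : Type*} [MeasurableSpace X] [MeasurableSpace Y]
    {μ : Measure X} {ν : Measure Y} [IsProbabilityMeasure μ] {π : Measure (X × Y)}
    (h : π ∈ couplings μ ν) : IsProbabilityMeasure π := by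
  constructor
  have := h.1
  calc π Set.univ = π (Prod.fst ⁻¹' Set.univ) := by rw [Set.preimage_univ]
    _ = (π.map Prod.fst) Set.univ := (Measure.map_apply measurable_fst MeasurableSet.univ).symm
    _ = μ Set.univ := by rw [this]
    _ = 1 := measure_univ

/-- Weak triangle inequality for the squared Wasserstein cost on product spaces. -/
lemma W2sqPi_triangle {d N : ℕ} (μ ν ρ : Measure (Fin N → EuclideanSpace ℝ (Fin d)))
    [IsProbabilityMeasure μ] [IsProbabilityMeasure ν] [IsProbabilityMeasure ρ] :
    W2sqPi μ ρ ≤ 2 * W2sqPi μ ν + 2 * W2sqPi ν ρ := by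
  set T := Fin N → EuclideanSpace ℝ (Fin d)
  set Cst : T → T → ℝ≥0∞ := fun x y => ∑ i, edist (x i) (y i) ^ 2 with hCst
  have hCmeas : Measurable fun p : T × T => Cst p.1 p.2 := by
    refine Finset.measurable_sum _ fun i _ => ?_
    exact (((measurable_pi_apply i).comp measurable_fst).edist
      ((measurable_pi_apply i).comp measurable_snd)).pow_const 2
  have hpt : ∀ x y z : T, Cst x z ≤ 2 * Cst x y + 2 * Cst y z := by
    intro x y z
    rw [hCst]
    simp only
    rw [Finset.mul_sum, Finset.mul_sum, ← Finset.sum_add_distrib]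
    refine Finset.sum_le_sum fun i _ => ?_
    calc edist (x i) (z i) ^ 2 ≤ (edist (x i) (y i) + edist (y i) (z i)) ^ 2 := by
          gcongr
          exact edist_triangle _ _ _
      _ ≤ 2 * edist (x i) (y i) ^ 2 + 2 * edist (y i) (z i) ^ 2 :=
          sq_add_le_two_mul_sq _ _
  have key : ∀ π1 ∈ couplings μ ν, ∀ π2 ∈ couplings ν ρ,
      W2sqPi μ ρ ≤ 2 * ∫⁻ p, Cst p.1 p.2 ∂π1 + 2 * ∫⁻ p, Cst p.1 p.2 ∂π2 := by
    intro π1 h1 π2 h2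
    haveI : IsProbabilityMeasure π1 := isProbabilityMeasure_of_coupling h1
    haveI : IsProbabilityMeasure π2 := isProbabilityMeasure_of_coupling h2
    have hmar : π1.map Prod.snd = π2.map Prod.fst := h1.2.trans h2.1.symm
    obtain ⟨π, hf, hs, hle⟩ := glue_le Cst Cst Cst hCmeas hCmeas hCmeas hpt π1 π2 hmar
    have hπ : π ∈ couplings μ ρ := ⟨hf.trans h1.1, hs.trans h2.2⟩
    refine le_trans ?_ hle
    exact iInf₂_le π hπ
  have step1 : ∀ π1 ∈ couplings μ ν,
      W2sqPi μ ρ ≤ 2 * ∫⁻ p, Cst p.1 p.2 ∂π1 + 2 * W2sqPi ν ρ := by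
    intro π1 h1
    rw [add_comm]
    unfold W2sqPi
    refine le_two_mul_iInf_add fun π2 h2 => ?_
    rw [add_comm]
    exact key π1 h1 π2 h2
  unfold W2sqPi
  refine le_two_mul_iInf_add fun π1 h1 => ?_
  have := step1 π1 h1
  unfold W2sqPi at this
  exact this

/-- Combining parallel-coupling chaos, entropy decay and equilibrium chaos estimates
yields exponential Wasserstein convergence of the nonlinear flow, letting `N → ∞`. -/
theorem nonlinear_W2_convergence {d : ℕ}
    (mt : ℝ → Measure (EuclideanSpace ℝ (Fin (2 * d))))
    (minf : Measure (EuclideanSpace ℝ (Fin (2 * d))))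
    (mN : (N : ℕ) → ℝ → Measure (Fin N → EuclideanSpace ℝ (Fin (2 * d))))
    (mNinf : (N : ℕ) → Measure (Fin N → EuclideanSpace ℝ (Fin (2 * d))))
    (hmt : ∀ t, IsProbabilityMeasure (mt t)) (hminf : IsProbabilityMeasure minf)
    (hmN : ∀ N t, IsProbabilityMeasure (mN N t)) (hmNinf : ∀ N, IsProbabilityMeasure (mNinf N))
    (K b χ : ℝ) (hK : 0 < K) (hb : 0 < b) (hχ : 0 < χ)
    (h1 : ∀ N : ℕ, 1 ≤ N → ∀ t : ℝ, 0 ≤ t →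
      W2sqPi (Measure.pi fun _ : Fin N => mt t) (mN N t) ≤ ENNReal.ofReal (K * Real.exp (2 * b * t)))
    (h2 : ∀ N : ℕ, 1 ≤ N → ∀ t : ℝ, 0 ≤ t →
      W2sqPi (mN N t) (mNinf N) ≤ ENNReal.ofReal (K * N * Real.exp (-χ * t)))
    (h3 : ∀ N : ℕ, 1 ≤ N → W2sqPi (mNinf N) (Measure.pi fun _ : Fin N => minf) ≤ ENNReal.ofReal K)
    (htens : ∀ N : ℕ, 1 ≤ N → ∀ t : ℝ, 0 ≤ t →
      W2sqPi (Measure.pi fun _ : Fin N => mt t) (Measure.pi fun _ : Fin N => minf)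
        = (N : ℝ≥0∞) * W2sq (mt t) minf) :
    ∃ K' : ℝ, 0 < K' ∧ ∀ t : ℝ, 0 ≤ t →
      W2sq (mt t) minf ≤ ENNReal.ofReal (K' * Real.exp (-χ * t)) := by
  refine ⟨4 * K + 1, by linarith, fun t ht => ?_⟩
  haveI := hmt t
  set Nr : ℝ := (2 * K * Real.exp (2 * b * t) + 4 * K) * Real.exp (χ * t) with hNr
  set N : ℕ := ⌈Nr⌉₊ + 1 with hN
  have hN1 : 1 ≤ N := Nat.le_add_left 1 _
  have hNrN : Nr ≤ (N : ℝ) := by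
    push_cast [hN]
    linarith [Nat.le_ceil Nr]
  haveI := hmN N t
  haveI := hmNinf N
  -- triangle inequality twice
  have tri : W2sqPi (Measure.pi fun _ : Fin N => mt t) (Measure.pi fun _ : Fin N => minf)
      ≤ 2 * W2sqPi (Measure.pi fun _ : Fin N => mt t) (mN N t)
        + 2 * (2 * W2sqPi (mN N t) (mNinf N)
          + 2 * W2sqPi (mNinf N) (Measure.pi fun _ : Fin N => minf)) := by
    calc W2sqPi (Measure.pi fun _ : Fin N => mt t) (Measure.pi fun _ : Fin N => minf)
        ≤ 2 * W2sqPi (Measure.pi fun _ : Fin N => mt t) (mN N t)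
          + 2 * W2sqPi (mN N t) (Measure.pi fun _ : Fin N => minf) := W2sqPi_triangle _ _ _
      _ ≤ 2 * W2sqPi (Measure.pi fun _ : Fin N => mt t) (mN N t)
          + 2 * (2 * W2sqPi (mN N t) (mNinf N)
            + 2 * W2sqPi (mNinf N) (Measure.pi fun _ : Fin N => minf)) := by
          gcongr
          exact W2sqPi_triangle _ _ _
  set S : ℝ := 2 * (K * Real.exp (2 * b * t)) + 4 * (K * N * Real.exp (-χ * t)) + 4 * K with hS
  have hexp1 : (0:ℝ) < Real.exp (2 * b * t) := Real.exp_pos _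
  have hexp2 : (0:ℝ) < Real.exp (-χ * t) := Real.exp_pos _
  have hexp3 : Real.exp (χ * t) * Real.exp (-χ * t) = 1 := by
    rw [← Real.exp_add]; ring_nf; exact Real.exp_zero
  have hNpos : (0:ℝ) < (N : ℝ) := by positivity
  have bound : W2sqPi (Measure.pi fun _ : Fin N => mt t) (Measure.pi fun _ : Fin N => minf)
      ≤ ENNReal.ofReal S := by
    refine tri.trans ?_
    have e2 : (2 : ℝ≥0∞) = ENNReal.ofReal 2 := by norm_num
    have hb1 := h1 N hN1 t ht
    have hb2 := h2 N hN1 t ht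
    have hb3 := h3 N hN1
    calc 2 * W2sqPi (Measure.pi fun _ : Fin N => mt t) (mN N t)
        + 2 * (2 * W2sqPi (mN N t) (mNinf N)
          + 2 * W2sqPi (mNinf N) (Measure.pi fun _ : Fin N => minf))
        ≤ 2 * ENNReal.ofReal (K * Real.exp (2 * b * t))
          + 2 * (2 * ENNReal.ofReal (K * N * Real.exp (-χ * t)) + 2 * ENNReal.ofReal K) := by
          gcongr
      _ = ENNReal.ofReal S := by
          rw [e2, ← ENNReal.ofReal_mul (by norm_num), ← ENNReal.ofReal_mul (by norm_num),
            ← ENNReal.ofReal_mul (by norm_num), ← ENNReal.ofReal_add (by positivity) (by positivity),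
            ← ENNReal.ofReal_mul (by norm_num), ← ENNReal.ofReal_add (by positivity) (by positivity)]
          rw [hS]
          ring_nf
  have hmul : (N : ℝ≥0∞) * W2sq (mt t) minf ≤ ENNReal.ofReal S := by
    rw [← htens N hN1 t ht]; exact bound
  have hdiv : W2sq (mt t) minf ≤ ENNReal.ofReal S / (N : ℝ≥0∞) := by
    rw [ENNReal.le_div_iff_mul_le (Or.inl ?_) (Or.inl (ENNReal.natCast_ne_top N))]
    · rw [mul_comm]; exact hmul
    · exact_mod_cast Nat.one_le_iff_ne_zero.mp hN1
  refine hdiv.trans ?_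
  refine ENNReal.div_le_of_le_mul ?_
  rw [← ENNReal.ofReal_natCast, ← ENNReal.ofReal_mul (by positivity)]
  refine ENNReal.ofReal_le_ofReal ?_
  -- real arithmetic: S ≤ (4K+1) e^{-χt} N
  have key : 2 * K * Real.exp (2 * b * t) + 4 * K ≤ (N : ℝ) * Real.exp (-χ * t) := by
    have := mul_le_mul_of_nonneg_right hNrN hexp2.le
    rw [hNr] at this
    calc 2 * K * Real.exp (2 * b * t) + 4 * K
        = (2 * K * Real.exp (2 * b * t) + 4 * K) * (Real.exp (χ * t) * Real.exp (-χ * t)) := by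
          rw [hexp3]; ring
      _ = (2 * K * Real.exp (2 * b * t) + 4 * K) * Real.exp (χ * t) * Real.exp (-χ * t) := by ring
      _ ≤ (N : ℝ) * Real.exp (-χ * t) := this
  rw [hS]
  nlinarith [key, hexp2.le, hNpos.le, hK.le]
end
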